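/- arXiv:1808.02262 — 5 statements merged into one kernel-verified Lean document; each statement's English description precedes it below -/
import Mathlib

section
/- Let K be a real quadratic number field with K ≠ Q(√5). Then there does not exist any Z-form (of any rank) that is universal over the ring of integers O_K of K. -/
open scoped BigOperators
open NumberField Matrix

noncomputable section

/-- Evaluation of an integer coefficient matrix as a quadratic form over a commutative ring. -/
def evalForm {r : ℕ} {R : Type*} [CommRing R] (a : Matrix (Fin r) (Fin r) ℤ) (v : Fin r → R) : R :=
  ∑ i, ∑ j, (a i j : R) * v i * v j

/-- A `ℤ`-form: the associated real quadratic form is positive definite. -/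
def IsPosDefForm {r : ℕ} (a : Matrix (Fin r) (Fin r) ℤ) : Prop :=
  ∀ v : Fin r → ℝ, v ≠ 0 → 0 < evalForm a v

/-- A form is classical if all its off-diagonal coefficients are even. -/
def IsClassicalForm {r : ℕ} (a : Matrix (Fin r) (Fin r) ℤ) : Prop :=
  ∀ i j, i ≠ j → (2 : ℤ) ∣ (a i j + a j i)

/-- An element of a field is totally positive if every real embedding sends it to
a positive real number. -/
def TotallyPositive {K : Type*} [Field K] (x : K) : Prop :=
  ∀ σ : K →+* ℝ, 0 < σ x

/-- A `ℤ`-form is universal over the ring of integers of `K` if it represents every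
totally positive algebraic integer of `K`. -/
def IsUniversal (K : Type*) [Field K] [NumberField K] {r : ℕ}
    (a : Matrix (Fin r) (Fin r) ℤ) : Prop :=
  ∀ α : 𝓞 K, TotallyPositive (α : K) → ∃ v : Fin r → 𝓞 K, evalForm a v = (α : 𝓞 K)

/-- A number field is totally real if all its complex embeddings have real image. -/
def IsTotallyRealField (K : Type*) [Field K] : Prop :=
  ∀ φ : K →+* ℂ, ∀ x : K, (φ x).im = 0

/-- The codifferent of the ring of integers of `K`. -/
def Codifferent (K : Type*) [Field K] [NumberField K] : Set K :=
  {β : K | ∀ x : 𝓞 K, ∃ n : ℤ, Algebra.trace ℚ K (β * x) = n}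

/-- The rational Gram matrix of an integral quadratic form. -/
def gramQ {r : ℕ} (a : Matrix (Fin r) (Fin r) ℤ) : Matrix (Fin r) (Fin r) ℚ :=
  (2 : ℚ)⁻¹ • (a.map (Int.cast : ℤ → ℚ) + (a.map (Int.cast : ℤ → ℚ))ᵀ)

/-- The value of the quadratic form with Gram matrix `G` at the integer vector `v`. -/
def qVal {ι : Type*} [Fintype ι] (G : Matrix ι ι ℚ) (v : ι → ℤ) : ℚ :=
  dotProduct (fun i => (v i : ℚ)) (G.mulVec fun i => (v i : ℚ))

/-- The minimal vectors of the lattice with Gram matrix `G`. -/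
def MinVecs {ι : Type*} [Fintype ι] (G : Matrix ι ι ℚ) : Set (ι → ℤ) :=
  {v | v ≠ 0 ∧ ∀ w : ι → ℤ, w ≠ 0 → qVal G v ≤ qVal G w}

/-- `m` is the minimum of the lattice with Gram matrix `G`. -/
def IsLatMin {ι : Type*} [Fintype ι] (G : Matrix ι ι ℚ) (m : ℚ) : Prop :=
  (∃ v : ι → ℤ, v ≠ 0 ∧ qVal G v = m) ∧ ∀ v : ι → ℤ, v ≠ 0 → m ≤ qVal G v

/-- Positive definiteness of a rational Gram matrix. -/
def PosDefQMat {ι : Type*} [Fintype ι] (G : Matrix ι ι ℚ) : Prop :=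
  ∀ x : ι → ℚ, x ≠ 0 → 0 < dotProduct x (G.mulVec x)

/-- A lattice (given by its rational Gram matrix `G`) is of `E`-type if for every classical
positive definite `ℤ`-lattice all minimal vectors of the tensor product are split. -/
def IsEType {ι : Type*} [Fintype ι] (G : Matrix ι ι ℚ) : Prop :=
  ∀ (s : ℕ) (N : Matrix (Fin s) (Fin s) ℤ), N.IsSymm →
    PosDefQMat (N.map (Int.cast : ℤ → ℚ)) →
    ∀ z ∈ MinVecs (Matrix.kroneckerMap (· * ·) G (N.map (Int.cast : ℤ → ℚ))),
      ∃ v ∈ MinVecs G, ∃ u ∈ MinVecs (N.map (Int.cast : ℤ → ℚ)),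
        z = fun p => v p.1 * u p.2

/-- The Gram matrix of the twisted trace form `t_δ` with respect to an integral
basis `ω` of the ring of integers. -/
def traceFormMat (K : Type*) [Field K] [NumberField K] {d : ℕ}
    (ω : Module.Basis (Fin d) ℤ (𝓞 K)) (δ : K) : Matrix (Fin d) (Fin d) ℚ :=
  fun i j => Algebra.trace ℚ K (δ * (ω i : K) * (ω j : K))



@[simp, norm_cast]
lemma OK_coe_intCast' {K : Type*} [Field K] (c : ℤ) : (((c : 𝓞 K)) : K) = (c : K) :=
  map_intCast (algebraMap (𝓞 K) K) c

lemma rat_int' (K : Type*) [Field K] [NumberField K] (η : 𝓞 K) (r : ℚ) (h : (η : K) = (r : K)) :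
    ∃ k : ℤ, r = k := by
  have h1 : IsIntegral ℤ ((η : K)) := η.2
  rw [h] at h1
  have h2 : IsIntegral ℤ r :=
    (isIntegral_algebraMap_iff (algebraMap ℚ K).injective).mp h1
  obtain ⟨k, hk⟩ := IsIntegrallyClosed.isIntegral_iff.mp h2
  exact ⟨k, by exact_mod_cast hk.symm⟩

lemma exists_omega' (K : Type*) [Field K] [NumberField K] (hdeg : Module.finrank ℚ K = 2) :
    ∃ ω : 𝓞 K, (∀ z : 𝓞 K, ∃ x y : ℤ, z = (x : 𝓞 K) + (y : 𝓞 K) * ω) ∧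
      (∀ k : ℤ, ω ≠ (k : 𝓞 K)) := by
  have hrank : Module.finrank ℤ (𝓞 K) = 2 := (RingOfIntegers.rank K).trans hdeg
  have hcard : Fintype.card (Module.Free.ChooseBasisIndex ℤ (𝓞 K)) = 2 := by
    rw [← Module.finrank_eq_card_chooseBasisIndex]; exact hrank
  let e : Module.Basis (Fin 2) ℤ (𝓞 K) :=
    (Module.Free.chooseBasis ℤ (𝓞 K)).reindex (Fintype.equivFinOfCardEq hcard)
  set p : ℤ := e.repr 1 0 with hp
  set q : ℤ := e.repr 1 1 with hq
  have h1 : (1 : 𝓞 K) = (p : 𝓞 K) * e 0 + (q : 𝓞 K) * e 1 := by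
    have := e.sum_repr 1
    rw [Fin.sum_univ_two] at this
    rw [← this]; simp [zsmul_eq_mul]; rfl
  have hg : (Int.gcd p q : ℤ) = 1 := by
    set g : ℤ := (Int.gcd p q : ℤ) with hgdef
    have hgp : g ∣ p := Int.gcd_dvd_left p q
    have hgq : g ∣ q := Int.gcd_dvd_right p q
    have hg0 : g ≠ 0 := by
      intro h0
      rw [hgdef] at h0
      have h0' : Int.gcd p q = 0 := by exact_mod_cast h0
      obtain ⟨hp0, hq0⟩ := Int.gcd_eq_zero_iff.mp h0'
      rw [hp0, hq0] at h1
      simp at h1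
    set η : 𝓞 K := ((p / g : ℤ) : 𝓞 K) * e 0 + ((q / g : ℤ) : 𝓞 K) * e 1 with hη
    have hgη : (g : 𝓞 K) * η = 1 := by
      rw [hη, h1]
      rw [mul_add, ← mul_assoc, ← mul_assoc]
      norm_cast
      rw [Int.mul_ediv_cancel' hgp, Int.mul_ediv_cancel' hgq]
    have hK : (g : K) * (η : K) = 1 := by
      have h2 := congrArg (algebraMap (𝓞 K) K) hgη
      rw [_root_.map_mul, _root_.map_one, map_intCast] at h2
      exact h2
    have hηK : (η : K) = (((g : ℚ)⁻¹ : ℚ) : K) := by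
      have hgK : (g : K) ≠ 0 := by exact_mod_cast fun h => hg0 (by exact_mod_cast h)
      push_cast
      field_simp
      linear_combination hK
    obtain ⟨k, hk⟩ := rat_int' K η _ hηK
    have hgk : g * k = 1 := by
      have : (g : ℚ) * k = 1 := by
        rw [← hk]
        field_simp
      exact_mod_cast this
    have : g = 1 ∨ g = -1 := Int.isUnit_iff.mp (IsUnit.of_mul_eq_one _ hgk)
    rcases this with h | h
    · exact h
    · exfalso
      have : (0:ℤ) ≤ g := Int.natCast_nonneg _
      omega
  set m : ℤ := Int.gcdA p q with hm
  set n : ℤ := Int.gcdB p q with hn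
  have hbez : p * m + q * n = 1 := by
    have := Int.gcd_eq_gcd_ab p q
    rw [hg] at this
    linarith [this]
  have hbezK : (p : 𝓞 K) * m + (q : 𝓞 K) * n = 1 := by
    exact_mod_cast congrArg (fun x : ℤ => (x : 𝓞 K)) hbez
  refine ⟨((-n : ℤ) : 𝓞 K) * e 0 + (m : 𝓞 K) * e 1, ?_, ?_⟩
  · intro z
    set z0 : ℤ := e.repr z 0
    set z1 : ℤ := e.repr z 1
    have hz : z = (z0 : 𝓞 K) * e 0 + (z1 : 𝓞 K) * e 1 := by
      have := e.sum_repr z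
      rw [Fin.sum_univ_two] at this
      rw [← this]; simp [zsmul_eq_mul]; rfl
    refine ⟨z0 * m + z1 * n, -z0 * q + z1 * p, ?_⟩
    push_cast
    linear_combination hz - ((z0 : 𝓞 K) * m + (z1 : 𝓞 K) * n) * h1
      - ((z0 : 𝓞 K) * e 0 + (z1 : 𝓞 K) * e 1) * hbezK
  · intro k hk
    have heq : ((-n - k*p : ℤ) : 𝓞 K) * e 0 + ((m - k*q : ℤ) : 𝓞 K) * e 1 = 0 := by
      push_cast at hk ⊢
      linear_combination hk + (k : 𝓞 K) * h1
    have hli := Fintype.linearIndependent_iff.mp e.linearIndependent ![(-n - k*p), (m - k*q)]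
    have h0 : ∑ i, (![(-n - k*p), (m - k*q)] : Fin 2 → ℤ) i • e i = 0 := by
      rw [Fin.sum_univ_two]
      simpa [zsmul_eq_mul] using heq
    have c0 := hli h0 0
    have c1 := hli h0 1
    simp only [Matrix.cons_val_zero, Matrix.cons_val_one, Matrix.head_cons] at c0 c1
    have : (1:ℤ) = 0 := by linear_combination -hbez + p*c1 - q*c0
    exact absurd this one_ne_zero

lemma exists_good_omega' {K : Type*} [Field K] [NumberField K] (σ : K →+* ℝ) (ω₀ : 𝓞 K)
    (hspan₀ : ∀ z : 𝓞 K, ∃ x y : ℤ, z = (x : 𝓞 K) + (y : 𝓞 K) * ω₀)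
    (hirr₀ : ∀ r : ℚ, (ω₀ : K) ≠ (r : K)) :
    ∃ (ω : 𝓞 K) (t u : ℤ),
      (∀ z : 𝓞 K, ∃ x y : ℤ, z = (x : 𝓞 K) + (y : 𝓞 K) * ω) ∧
      (∀ r : ℚ, (ω : K) ≠ (r : K)) ∧
      ω ^ 2 = (u : 𝓞 K) + (t : 𝓞 K) * ω ∧
      1 ≤ u ∧ 0 ≤ t ∧ -1 < σ (ω : K) ∧ σ (ω : K) < 0 := by
  have hirrR : ∀ (η : 𝓞 K), (∀ r : ℚ, (η : K) ≠ (r : K)) → ∀ r : ℚ, σ (η : K) ≠ (r : ℝ) := by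
    intro η hη r h
    exact hη r (σ.injective (by rw [h, map_ratCast]))
  obtain ⟨u₀, t₀, hrel₀⟩ := hspan₀ (ω₀ ^ 2)
  have key : ∃ (ω₁ : 𝓞 K) (t₁ u₁ : ℤ),
      (∀ z : 𝓞 K, ∃ x y : ℤ, z = (x : 𝓞 K) + (y : 𝓞 K) * ω₁) ∧
      (∀ r : ℚ, (ω₁ : K) ≠ (r : K)) ∧
      ω₁ ^ 2 = (u₁ : 𝓞 K) + (t₁ : 𝓞 K) * ω₁ ∧
      2 * σ (ω₁ : K) < (t₁ : ℝ) := by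
    rcases lt_or_ge (2 * σ (ω₀ : K)) (t₀ : ℝ) with h | h
    · exact ⟨ω₀, t₀, u₀, hspan₀, hirr₀, hrel₀, h⟩
    · refine ⟨-ω₀, -t₀, u₀, ?_, ?_, ?_, ?_⟩
      · intro z
        obtain ⟨x, y, hz⟩ := hspan₀ z
        exact ⟨x, -y, by push_cast; linear_combination hz⟩
      · intro r h
        exact hirr₀ (-r) (by push_cast at h ⊢; linear_combination -h)
      · push_cast
        linear_combination hrel₀
      · have hne : 2 * σ (ω₀ : K) ≠ (t₀ : ℝ) := by
          intro he
          exact hirrR ω₀ hirr₀ ((t₀ : ℚ) / 2) (by push_cast; linarith)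
        have hlt : (t₀ : ℝ) < 2 * σ (ω₀ : K) := lt_of_le_of_ne h hne.symm
        have : ((-ω₀ : 𝓞 K) : K) = -(ω₀ : K) := by push_cast; ring
        rw [this, map_neg]
        push_cast
        linarith
  obtain ⟨ω₁, t₁, u₁, hspan₁, hirr₁, hrel₁, hlt₁⟩ := key
  set c : ℤ := ⌈σ (ω₁ : K)⌉ with hc
  have hσω : σ ((ω₁ - c : 𝓞 K) : K) = σ (ω₁ : K) - c := by
    have : ((ω₁ - c : 𝓞 K) : K) = (ω₁ : K) - (c : K) := by push_cast; ring
    rw [this, map_sub, map_intCast]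

  have hirr' : ∀ r : ℚ, ((ω₁ - c : 𝓞 K) : K) ≠ (r : K) := by
    intro r h
    apply hirr₁ (r + c)
    push_cast at h ⊢
    linear_combination h
  have hwR : ∀ r : ℚ, σ (ω₁ : K) - (c : ℝ) ≠ (r : ℝ) := by
    intro r
    have := hirrR _ hirr' r
    rwa [hσω] at this
  have hw1 : -1 < σ (ω₁ : K) - (c : ℝ) := by
    have := Int.ceil_lt_add_one (σ (ω₁ : K))
    rw [← hc] at this
    linarith
  have hw0 : σ (ω₁ : K) - (c : ℝ) < 0 := by
    have hle := Int.le_ceil (σ (ω₁ : K))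
    rw [← hc] at hle
    have hne := hwR 0
    push_cast at hne
    rcases lt_or_eq_of_le hle with h | h
    · linarith
    · exact absurd (by linarith) hne
  set w : ℝ := σ (ω₁ : K) - (c : ℝ) with hwdef
  have hrelR : w ^ 2 = ((u₁ + t₁ * c - c ^ 2 : ℤ) : ℝ) + ((t₁ - 2 * c : ℤ) : ℝ) * w := by
    have h2 := congrArg (algebraMap (𝓞 K) K) hrel₁
    rw [map_pow, map_add, _root_.map_mul] at h2
    have h3 := congrArg σ h2
    rw [map_pow, map_add, _root_.map_mul] at h3
    simp only [OK_coe_intCast', map_intCast] at h3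
    push_cast
    rw [hwdef]
    linear_combination h3
  have hlt : 2 * w < ((t₁ - 2 * c : ℤ) : ℝ) := by
    rw [hwdef]; push_cast; linarith
  have htnn : 0 ≤ t₁ - 2 * c := by
    by_contra hneg
    push_neg at hneg
    have htle : ((t₁ - 2 * c : ℤ) : ℝ) ≤ -1 := by
      have : t₁ - 2 * c ≤ -1 := by omega
      exact_mod_cast this
    have hwstar0 : ((t₁ - 2 * c : ℤ) : ℝ) - w < 0 := by linarith
    have hwstar1 : -1 < ((t₁ - 2 * c : ℤ) : ℝ) - w := by linarith
    have hut : ((u₁ + t₁ * c - c ^ 2 : ℤ) : ℝ) = w * (w - ((t₁ - 2 * c : ℤ) : ℝ)) := by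
      linarith [hrelR]
    have hub : ((u₁ + t₁ * c - c ^ 2 : ℤ) : ℝ) < 1 := by nlinarith
    have hlb : (-1 : ℝ) < ((u₁ + t₁ * c - c ^ 2 : ℤ) : ℝ) := by nlinarith
    have hu0 : u₁ + t₁ * c - c ^ 2 = 0 := by
      have h1' : u₁ + t₁ * c - c ^ 2 < 1 := by exact_mod_cast hub
      have h2' : -1 < u₁ + t₁ * c - c ^ 2 := by exact_mod_cast hlb
      omega
    have hU0 : ((u₁ + t₁ * c - c ^ 2 : ℤ) : ℝ) = 0 := by exact_mod_cast hu0
    have : w * (w - ((t₁ - 2 * c : ℤ) : ℝ)) = 0 := by rw [← hut, hU0]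
    rcases mul_eq_zero.mp this with h | h
    · exact absurd h (ne_of_lt hw0)
    · apply hwR ((t₁ - 2 * c : ℤ) : ℚ)
      have hwT : w = ((t₁ - 2 * c : ℤ) : ℝ) := by linarith
      rw [hwT]
      push_cast
      ring
  have hupos : 1 ≤ u₁ + t₁ * c - c ^ 2 := by
    have hT0 : (0 : ℝ) ≤ ((t₁ - 2 * c : ℤ) : ℝ) := by exact_mod_cast htnn
    have hut : ((u₁ + t₁ * c - c ^ 2 : ℤ) : ℝ) = w * (w - ((t₁ - 2 * c : ℤ) : ℝ)) := by
      linarith [hrelR]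
    have hpos : (0 : ℝ) < ((u₁ + t₁ * c - c ^ 2 : ℤ) : ℝ) := by nlinarith
    have : 0 < u₁ + t₁ * c - c ^ 2 := by exact_mod_cast hpos
    omega
  refine ⟨ω₁ - c, t₁ - 2 * c, u₁ + t₁ * c - c ^ 2, ?_, hirr', ?_, hupos, htnn, ?_, ?_⟩
  · intro z
    obtain ⟨x, y, hz⟩ := hspan₁ z
    exact ⟨x + y * c, y, by push_cast; linear_combination hz⟩
  · push_cast
    linear_combination hrel₁
  · rw [hσω]; exact hw1
  · rw [hσω]; exact hw0

lemma evalForm_decomp' {r : ℕ} {R : Type*} [CommRing R] (a : Matrix (Fin r) (Fin r) ℤ)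
    (x y : Fin r → ℤ) (ω : R) (t u : ℤ) (hrel : ω ^ 2 = (u : R) + (t : R) * ω) :
    evalForm a (fun i => (x i : R) + (y i : R) * ω)
      = ((evalForm a x + u * evalForm a y : ℤ) : R)
        + (((evalForm a (x + y) - evalForm a x - evalForm a y) + t * evalForm a y : ℤ) : R) * ω := by
  have step1 : evalForm a (fun i => (x i : R) + (y i : R) * ω)
      = ∑ i, ∑ j, (((a i j * x i * x j + u * (a i j * y i * y j) : ℤ) : R)
          + ((a i j * ((x i + y i) * (x j + y j) - x i * x j - y i * y j)
              + t * (a i j * y i * y j) : ℤ) : R) * ω) := by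
    unfold evalForm
    refine Finset.sum_congr rfl fun i _ => Finset.sum_congr rfl fun j _ => ?_
    push_cast
    linear_combination ((a i j : R) * y i * y j) * hrel
  rw [step1]
  simp only [Finset.sum_add_distrib, ← Finset.sum_mul]
  congr 1
  · push_cast [evalForm]
    simp only [Finset.mul_sum, ← Finset.sum_add_distrib]
  · congr 1
    push_cast [evalForm]
    simp only [Pi.add_apply]
    push_cast
    simp only [Finset.mul_sum, ← Finset.sum_sub_distrib, ← Finset.sum_add_distrib]
    refine Finset.sum_congr rfl fun i _ => Finset.sum_congr rfl fun j _ => ?_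
    ring

lemma coeff_unique' {K : Type*} [Field K] [NumberField K] (ω : 𝓞 K)
    (hirr : ∀ s : ℚ, (ω : K) ≠ (s : K)) (p q p' q' : ℤ)
    (h : (p : 𝓞 K) + (q : 𝓞 K) * ω = (p' : 𝓞 K) + (q' : 𝓞 K) * ω) : p = p' ∧ q = q' := by
  have hK : (p : K) + (q : K) * (ω : K) = (p' : K) + (q' : K) * (ω : K) := by
    have h2 := congrArg (algebraMap (𝓞 K) K) h
    rw [map_add, map_add, _root_.map_mul, _root_.map_mul, map_intCast, map_intCast,
      map_intCast, map_intCast] at h2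
    exact h2
  by_cases hq : q = q'
  · subst hq
    refine ⟨?_, rfl⟩
    have : (p : K) = (p' : K) := by linear_combination hK
    exact_mod_cast this
  · exfalso
    have hqK : ((q' : K) - (q : K)) ≠ 0 := by
      rw [sub_ne_zero]
      exact_mod_cast Ne.symm hq
    have hω : (ω : K) = ((p : K) - p') / ((q' : K) - q) := by
      rw [eq_div_iff hqK]
      linear_combination -hK
    exact hirr (((p : ℚ) - p') / ((q' : ℚ) - q)) (by rw [hω]; push_cast; ring)


/-- There is no `ℤ`-form (positive definite quadratic form with rational
integer coefficients, of any rank) that is universal over the ring of integers of a real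
quadratic number field `K`, unless `K = ℚ(√5)`. -/
theorem no_universal_ZForm_over_real_quadratic_field
    (K : Type*) [Field K] [NumberField K]
    (hdeg : Module.finrank ℚ K = 2)
    (hreal : Nonempty (K →+* ℝ))
    (hK5 : ¬ ∃ x : K, x ^ 2 = 5) :
    ¬ ∃ (r : ℕ) (a : Matrix (Fin r) (Fin r) ℤ), IsPosDefForm a ∧ IsUniversal K a := by
  rintro ⟨r, a, hpd, huniv⟩
  obtain ⟨σ⟩ := hreal
  obtain ⟨ω₀, hspan₀, hint₀⟩ := exists_omega' K hdeg
  have hirr₀ : ∀ s : ℚ, (ω₀ : K) ≠ (s : K) := by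
    intro s h
    obtain ⟨k, hk⟩ := rat_int' K ω₀ s h
    apply hint₀ k
    have h2 : (ω₀ : K) = ((k : 𝓞 K) : K) := by rw [h, hk]; push_cast; ring
    exact_mod_cast h2
  obtain ⟨ω, t, u, hspan, hirr, hrel, hu, ht, hw1, hw0⟩ := exists_good_omega' σ ω₀ hspan₀ hirr₀
  -- positivity of the form on integer vectors
  have hposInt : ∀ z : Fin r → ℤ, z ≠ 0 → 0 < evalForm a z := by
    intro z hz
    have hcast : ((evalForm a z : ℤ) : ℝ) = evalForm a (fun i => (z i : ℝ)) := by
      push_cast [evalForm]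
      ring
    have hzR : (fun i => ((z i : ℝ))) ≠ 0 := by
      intro h
      apply hz
      funext i
      have h2 : ((z i : ℝ)) = 0 := by simpa using congrFun h i
      exact_mod_cast h2
    have h3 := hpd _ hzR
    rw [← hcast] at h3
    exact_mod_cast h3
  have hnonneg : ∀ z : Fin r → ℤ, 0 ≤ evalForm a z := by
    intro z
    rcases eq_or_ne z 0 with h | h
    · simp [h, evalForm]
    · exact le_of_lt (hposInt z h)
  -- the relation over K and ℝ
  have hrelK : ((ω : K)) ^ 2 = (u : K) + (t : K) * (ω : K) := by
    have h2 := congrArg (algebraMap (𝓞 K) K) hrel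
    rw [map_pow, map_add, _root_.map_mul, map_intCast, map_intCast] at h2
    exact h2
  have hrelσ : (σ (ω : K)) ^ 2 = (u : ℝ) + (t : ℝ) * σ (ω : K) := by
    have h2 := congrArg σ hrelK
    rwa [map_pow, map_add, _root_.map_mul, map_intCast, map_intCast] at h2
  -- the element 1 + ω is totally positive
  have htp : TotallyPositive (((1 + ω : 𝓞 K)) : K) := by
    intro τ
    have hτ : τ ((1 + ω : 𝓞 K) : K) = 1 + τ (ω : K) := by
      have hc1 : ((1 + ω : 𝓞 K) : K) = 1 + (ω : K) := by push_cast; ring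
      rw [hc1, map_add, _root_.map_one]
    have hrelτ : (τ (ω : K)) ^ 2 = (u : ℝ) + (t : ℝ) * τ (ω : K) := by
      have h2 := congrArg τ hrelK
      rwa [map_pow, map_add, _root_.map_mul, map_intCast, map_intCast] at h2
    have hprod : (τ (ω : K) - σ (ω : K)) * (τ (ω : K) - ((t : ℝ) - σ (ω : K))) = 0 := by
      linear_combination hrelτ - hrelσ
    have htR : (0 : ℝ) ≤ (t : ℝ) := by exact_mod_cast ht
    rw [hτ]
    rcases mul_eq_zero.mp hprod with h | h
    · have : τ (ω : K) = σ (ω : K) := by linarith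
      linarith
    · have : τ (ω : K) = (t : ℝ) - σ (ω : K) := by linarith
      linarith
  obtain ⟨v, hv⟩ := huniv (1 + ω) htp
  choose x y hxy using fun i => hspan (v i)
  have hveq : v = fun i => ((x i : 𝓞 K) + (y i : 𝓞 K) * ω) := funext hxy
  rw [hveq] at hv
  rw [evalForm_decomp' a x y ω t u hrel] at hv
  have hmatch := coeff_unique' ω hirr
      (evalForm a x + u * evalForm a y)
      ((evalForm a (x + y) - evalForm a x - evalForm a y) + t * evalForm a y) 1 1
      (by rw [hv]; push_cast; ring)
  obtain ⟨h1, h2⟩ := hmatch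
  -- y must be nonzero
  have hE0 : evalForm a (0 : Fin r → ℤ) = 0 := by simp [evalForm]
  have hy : y ≠ 0 := by
    intro h0
    rw [h0, add_zero, hE0, mul_zero] at h2
    omega
  have hYpos : 1 ≤ evalForm a y := hposInt y hy
  have hXnn : 0 ≤ evalForm a x := hnonneg x
  have huY : 1 ≤ u * evalForm a y := by nlinarith
  have hX0 : evalForm a x = 0 := by linarith
  have hx0 : x = 0 := by
    by_contra h
    have := hposInt x h
    omega
  have hle1 : u * 1 ≤ u * evalForm a y :=
    mul_le_mul_of_nonneg_left hYpos (by linarith)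
  have hle2 : 1 * evalForm a y ≤ u * evalForm a y :=
    mul_le_mul_of_nonneg_right hu (by linarith)
  have hu1 : u = 1 := by linarith
  have hY1 : evalForm a y = 1 := by linarith
  have hM0 : evalForm a (x + y) - evalForm a x - evalForm a y = 0 := by
    rw [hx0, zero_add, hE0]
    ring
  have ht1 : t = 1 := by
    rw [hM0, hY1] at h2
    omega
  -- hence ω² = 1 + ω and √5 ∈ K
  apply hK5
  refine ⟨2 * (ω : K) - 1, ?_⟩
  rw [hu1, ht1] at hrelK
  push_cast at hrelK
  linear_combination (4 : K) * hrelK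

end
end

section
/- Let O be an order in a totally real number field K of degree d. If β ∈ O^+ is totally positive with norm N(β) < 2^d, then β is indecomposable, i.e., β cannot be written as a sum of two totally positive elements of O. -/
open scoped BigOperators
open NumberField Matrix

noncomputable section

/-- Real embedding from a complex embedding of a totally real field. -/
def realEmbAux {K : Type*} [Field K] (htr : IsTotallyRealField K) (φ : K →+* ℂ) : K →+* ℝ where
  toFun x := (φ x).re
  map_one' := by simp
  map_zero' := by simp
  map_add' x y := by simp
  map_mul' x y := by
    simp [Complex.mul_re, htr φ x, htr φ y]

/-- In an order `O` of a totally real number field `K` of degree `d`,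
every totally positive `β ∈ O` with `N(β) < 2^d` is indecomposable: it is not a sum of
two totally positive elements of `O`. -/
theorem indecomposable_of_norm_lt_two_pow_degree
    (K : Type*) [Field K] [NumberField K]
    (htr : IsTotallyRealField K)
    (O : Subalgebra ℤ K)
    (hfg : (Subalgebra.toSubmodule O).FG)
    (hfull : Submodule.span ℚ (O : Set K) = ⊤)
    (β : K) (hβO : β ∈ O) (hβpos : TotallyPositive β)
    (hnorm : Algebra.norm ℚ β < 2 ^ Module.finrank ℚ K) :
    ¬ ∃ a b : K, a ∈ O ∧ b ∈ O ∧ TotallyPositive a ∧ TotallyPositive b ∧ β = a + b := by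
  rintro ⟨a, b, haO, hbO, hapos, hbpos, hab⟩
  -- norm as real product over embeddings
  have normeq : ∀ x : K, ((Algebra.norm ℚ x : ℚ) : ℝ) = ∏ φ : K →ₐ[ℚ] ℂ, (φ x).re := by
    intro x
    have h := Algebra.norm_eq_prod_embeddings ℚ ℂ x
    have h2 : ∀ φ : K →ₐ[ℚ] ℂ, φ x = (((φ x).re : ℝ) : ℂ) := by
      intro φ
      exact Complex.ext (by simp) (by simpa using htr (φ : K →+* ℂ) x)
    rw [Finset.prod_congr rfl (fun φ _ => h2 φ), ← Complex.ofReal_prod] at h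
    have h3 : ((Algebra.norm ℚ x : ℚ) : ℂ) = (((Algebra.norm ℚ x : ℚ) : ℝ) : ℂ) := by
      push_cast; ring
    rw [show (algebraMap ℚ ℂ) (Algebra.norm ℚ x) = ((Algebra.norm ℚ x : ℚ) : ℂ) from rfl, h3] at h
    exact_mod_cast h
  have hpos : ∀ x : K, TotallyPositive x → ∀ φ : K →ₐ[ℚ] ℂ, 0 < (φ x).re := by
    intro x hx φ
    exact hx (realEmbAux htr φ.toRingHom)
  -- norms of a and b are ≥ 1
  have hge1 : ∀ x : K, x ∈ O → TotallyPositive x →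
      (1 : ℝ) ≤ ∏ φ : K →ₐ[ℚ] ℂ, (φ x).re := by
    intro x hxO hx
    have hint : IsIntegral ℤ x := .of_mem_of_fg O hfg x hxO
    have hni : IsIntegral ℤ (Algebra.norm ℚ x) := Algebra.isIntegral_norm ℚ hint
    obtain ⟨n, hn⟩ := IsIntegrallyClosed.isIntegral_iff.mp hni
    have hprodpos : (0 : ℝ) < ∏ φ : K →ₐ[ℚ] ℂ, (φ x).re :=
      Finset.prod_pos (fun φ _ => hpos x hx φ)
    rw [← normeq x] at hprodpos ⊢
    have hn2 : Algebra.norm ℚ x = (n : ℚ) := by rw [← hn, eq_intCast]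
    rw [hn2] at hprodpos ⊢
    have h0 : (0 : ℤ) < n := by exact_mod_cast hprodpos
    have h1 : (1 : ℤ) ≤ n := h0
    exact_mod_cast h1
  set d := Module.finrank ℚ K with hd
  have hcard : Fintype.card (K →ₐ[ℚ] ℂ) = d := AlgHom.card ℚ K ℂ
  -- key inequality
  have key : ((2 : ℝ) ^ d) ^ 2 ≤ (∏ φ : K →ₐ[ℚ] ℂ, (φ β).re) ^ 2 := by
    have hsplit : ∀ φ : K →ₐ[ℚ] ℂ, (φ β).re = (φ a).re + (φ b).re := by
      intro φ; rw [hab, map_add, Complex.add_re]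
    have hsq : ((2 : ℝ) ^ d) ^ 2 = 4 ^ d := by
      rw [← pow_mul, mul_comm, pow_mul]; norm_num
    have hprodeq : ∏ φ : K →ₐ[ℚ] ℂ, (4 : ℝ) * ((φ a).re * (φ b).re)
        = 4 ^ d * ((∏ φ : K →ₐ[ℚ] ℂ, (φ a).re) * (∏ φ : K →ₐ[ℚ] ℂ, (φ b).re)) := by
      rw [Finset.prod_mul_distrib, Finset.prod_const, Finset.card_univ, hcard,
        Finset.prod_mul_distrib]
    have h12 : (1 : ℝ) ≤ (∏ φ : K →ₐ[ℚ] ℂ, (φ a).re) * (∏ φ : K →ₐ[ℚ] ℂ, (φ b).re) := by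
      nlinarith [hge1 a haO hapos, hge1 b hbO hbpos]
    calc ((2 : ℝ) ^ d) ^ 2 = 4 ^ d := hsq
      _ ≤ 4 ^ d * ((∏ φ : K →ₐ[ℚ] ℂ, (φ a).re) * (∏ φ : K →ₐ[ℚ] ℂ, (φ b).re)) :=
          le_mul_of_one_le_right (le_of_lt (pow_pos (by norm_num) d)) h12
      _ = ∏ φ : K →ₐ[ℚ] ℂ, 4 * ((φ a).re * (φ b).re) := hprodeq.symm
      _ ≤ ∏ φ : K →ₐ[ℚ] ℂ, ((φ β).re) ^ 2 := by
          apply Finset.prod_le_prod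
          · intro φ _
            have := hpos a hapos φ; have := hpos b hbpos φ
            positivity
          · intro φ _
            rw [hsplit φ]
            nlinarith [hpos a hapos φ, hpos b hbpos φ, sq_nonneg ((φ a).re - (φ b).re)]
      _ = (∏ φ : K →ₐ[ℚ] ℂ, (φ β).re) ^ 2 := by
          rw [Finset.prod_pow]
  have hβprodpos : (0 : ℝ) < ∏ φ : K →ₐ[ℚ] ℂ, (φ β).re :=
    Finset.prod_pos (fun φ _ => hpos β hβpos φ)
  have hβlt : (∏ φ : K →ₐ[ℚ] ℂ, (φ β).re) < 2 ^ d := by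
    rw [← normeq β]
    exact_mod_cast hnorm
  nlinarith [pow_pos (by norm_num : (0:ℝ) < 2) d]


end
end

section
/- Let O be an order in a totally real number field K of degree d, and let α ∈ O^+ be totally positive. If α is represented over O by some Z-form (of any rank), then there exists a Z-form Q of rank at most d that represents α over O. Moreover, there exists a d-ary positive semidefinite quadratic form with integer coefficients that represents α over O. -/
open scoped BigOperators
open NumberField Matrix

noncomputable section

section Aux

lemma sum4_comm {ι κ M : Type*} [Fintype ι] [Fintype κ] [AddCommMonoid M]
    (f : ι → ι → κ → κ → M) :
    ∑ k : κ, ∑ l : κ, ∑ i : ι, ∑ j : ι, f i j k l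
      = ∑ i : ι, ∑ j : ι, ∑ k : κ, ∑ l : κ, f i j k l :=
  calc ∑ k : κ, ∑ l : κ, ∑ i : ι, ∑ j : ι, f i j k l
      = ∑ k : κ, ∑ i : ι, ∑ l : κ, ∑ j : ι, f i j k l :=
        Finset.sum_congr rfl fun _ _ => Finset.sum_comm
    _ = ∑ i : ι, ∑ k : κ, ∑ l : κ, ∑ j : ι, f i j k l := Finset.sum_comm
    _ = ∑ i : ι, ∑ k : κ, ∑ j : ι, ∑ l : κ, f i j k l :=
        Finset.sum_congr rfl fun _ _ => Finset.sum_congr rfl fun _ _ => Finset.sum_comm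
    _ = ∑ i : ι, ∑ j : ι, ∑ k : κ, ∑ l : κ, f i j k l :=
        Finset.sum_congr rfl fun _ _ => Finset.sum_comm

lemma evalForm_subst {r e : ℕ} {R : Type*} [CommRing R] (a : Matrix (Fin r) (Fin r) ℤ)
    (c : Fin r → Fin e → ℤ) (x : Fin e → R) :
    evalForm (fun k l => ∑ i, ∑ j, a i j * c i k * c j l) x
      = evalForm a (fun i => ∑ k, (c i k : R) * x k) := by
  unfold evalForm
  have h1 : ∀ k l : Fin e,
      ((∑ i, ∑ j, a i j * c i k * c j l : ℤ) : R) * x k * x l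
        = ∑ i, ∑ j, (a i j : R) * ((c i k : R) * x k) * ((c j l : R) * x l) := by
    intro k l
    push_cast
    rw [Finset.sum_mul, Finset.sum_mul]
    refine Finset.sum_congr rfl fun i _ => ?_
    rw [Finset.sum_mul, Finset.sum_mul]
    refine Finset.sum_congr rfl fun j _ => ?_
    ring
  have h2 : ∀ i j : Fin r,
      (a i j : R) * (∑ k, (c i k : R) * x k) * (∑ l, (c j l : R) * x l)
        = ∑ k, ∑ l, (a i j : R) * ((c i k : R) * x k) * ((c j l : R) * x l) := by
    intro i j
    simp only [Finset.mul_sum, Finset.sum_mul]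
    rw [Finset.sum_comm]
  simp only [h1, h2]
  exact sum4_comm _

lemma sum_pad {e d : ℕ} (h : e ≤ d) {M : Type*} [AddCommMonoid M] (g : Fin d → M)
    (hg : ∀ i : Fin d, ¬ ((i : ℕ) < e) → g i = 0) :
    ∑ i, g i = ∑ k : Fin e, g (Fin.castLE h k) := by
  have key : ∑ k : Fin e, g (Fin.castLE h k) = ∑ i ∈ Finset.univ.map (Fin.castLEEmb h), g i :=
    (Finset.sum_map Finset.univ (Fin.castLEEmb h) g).symm
  rw [key]
  refine (Finset.sum_subset (Finset.subset_univ _) ?_).symm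
  intro i _ hi
  refine hg i fun hlt => hi ?_
  simp only [Finset.mem_map, Finset.mem_univ, true_and]
  exact ⟨⟨(i : ℕ), hlt⟩, Fin.ext rfl⟩

lemma evalForm_pad {e d : ℕ} (h : e ≤ d) {R : Type*} [CommRing R]
    (b : Matrix (Fin e) (Fin e) ℤ) (x : Fin d → R) :
    evalForm (fun i j => if hi : (i : ℕ) < e then if hj : (j : ℕ) < e then
        b ⟨i, hi⟩ ⟨j, hj⟩ else 0 else 0) x
      = evalForm b (fun k => x (Fin.castLE h k)) := by
  unfold evalForm
  rw [sum_pad h]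
  · refine Finset.sum_congr rfl fun k _ => ?_
    rw [sum_pad h]
    · refine Finset.sum_congr rfl fun l _ => ?_
      simp [Fin.castLE]
    · intro j hj
      simp [hj]
  · intro i hi
    simp [hi]

end Aux

/-- If a totally positive element `α` of an order `O` in a totally real
number field of degree `d` is represented over `O` by some `ℤ`-form, then it is represented
over `O` by a `ℤ`-form of rank at most `d`; moreover it is represented over `O` by some
`d`-ary positive semidefinite quadratic form with integer coefficients. -/
theorem represented_by_small_rank_ZForm
    (K : Type*) [Field K] [NumberField K]
    (htr : IsTotallyRealField K)
    (O : Subalgebra ℤ K)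
    (hfg : (Subalgebra.toSubmodule O).FG)
    (hfull : Submodule.span ℚ (O : Set K) = ⊤)
    (α : K) (hαO : α ∈ O) (hαpos : TotallyPositive α)
    (hrep : ∃ (r : ℕ) (a : Matrix (Fin r) (Fin r) ℤ), IsPosDefForm a ∧
      ∃ v : Fin r → K, (∀ i, v i ∈ O) ∧ evalForm a v = α) :
    (∃ r : ℕ, r ≤ Module.finrank ℚ K ∧
      ∃ a : Matrix (Fin r) (Fin r) ℤ, IsPosDefForm a ∧
        ∃ v : Fin r → K, (∀ i, v i ∈ O) ∧ evalForm a v = α) ∧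
    (∃ a₀ : Matrix (Fin (Module.finrank ℚ K)) (Fin (Module.finrank ℚ K)) ℤ,
      (∀ v : Fin (Module.finrank ℚ K) → ℝ, 0 ≤ evalForm a₀ v) ∧
        ∃ v : Fin (Module.finrank ℚ K) → K, (∀ i, v i ∈ O) ∧ evalForm a₀ v = α) := by
  classical
  obtain ⟨r, a, ha, v, hvO, hval⟩ := hrep
  set M : Submodule ℤ K := Submodule.span ℤ (Set.range v) with hMdef
  have hMO : M ≤ Subalgebra.toSubmodule O := by
    rw [hMdef, Submodule.span_le]
    rintro _ ⟨i, rfl⟩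
    exact hvO i
  haveI : Module.Finite ℤ M :=
    Module.Finite.iff_fg.mpr (Submodule.fg_span (Set.finite_range v))
  haveI : NoZeroSMulDivisors ℤ M := by
    constructor
    intro n m hnm
    have hK : n • (m : K) = 0 := by
      have := congrArg (Subtype.val) hnm
      simpa using this
    rcases smul_eq_zero.mp hK with h | h
    · exact Or.inl h
    · exact Or.inr (Subtype.ext h)
  haveI : Module.Free ℤ M := Module.free_of_finite_type_torsion_free'
  set e := Module.finrank ℤ M with hedef
  let B : Module.Basis (Fin e) ℤ M := Module.finBasis ℤ M
  let w : Fin e → K := fun k => ((B k : M) : K)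
  have hwM : ∀ k, w k ∈ M := fun k => (B k).2
  have hwO : ∀ k, w k ∈ O := fun k => hMO (hwM k)
  have hlinZ : LinearIndependent ℤ w :=
    B.linearIndependent.map' M.subtype (Submodule.ker_subtype M)
  have hlinQ : LinearIndependent ℚ w := (LinearIndependent.iff_fractionRing ℤ ℚ).mp hlinZ
  have he : e ≤ Module.finrank ℚ K := by
    have := hlinQ.fintype_card_le_finrank
    simpa using this
  have hvM : ∀ i, v i ∈ M := fun i => Submodule.subset_span (Set.mem_range_self i)
  set c : Fin r → Fin e → ℤ := fun i k => B.repr ⟨v i, hvM i⟩ k with hcdef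
  have hv : ∀ i, v i = ∑ k, c i k • w k := by
    intro i
    have h := congrArg (Subtype.val) (B.sum_repr ⟨v i, hvM i⟩).symm
    refine h.trans ?_
    rw [Submodule.coe_sum]
    rfl
  have hvmul : ∀ i, v i = ∑ k, (c i k : K) * w k := by
    intro i
    rw [hv i]
    exact Finset.sum_congr rfl fun k _ => (zsmul_eq_mul _ _)
  have hD : ∀ k : Fin e, ∃ Dk : Fin r → ℤ, ∑ i, Dk i • v i = w k := fun k =>
    (Submodule.mem_span_range_iff_exists_fun ℤ).mp (hwM k)
  choose D hDv using hD
  have hDC : ∀ k l : Fin e, (∑ i, D k i * c i l) = if l = k then (1 : ℤ) else 0 := by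
    intro k l
    have key : ∑ l' : Fin e,
        ((∑ i, D k i * c i l') - (if l' = k then (1 : ℤ) else 0)) • w l' = 0 := by
      have h1 : ∑ l' : Fin e, (∑ i, D k i * c i l') • w l' = ∑ i, D k i • v i := by
        have expand : ∀ l' : Fin e, (∑ i, D k i * c i l') • w l'
            = ∑ i, D k i • (c i l' • w l') := by
          intro l'
          rw [Finset.sum_smul]
          exact Finset.sum_congr rfl fun i _ => mul_smul _ _ _
        simp only [expand]
        rw [Finset.sum_comm]
        refine Finset.sum_congr rfl fun i _ => ?_
        rw [← Finset.smul_sum, ← hv i]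
      have h2 : ∑ l' : Fin e, (if l' = k then (1 : ℤ) else 0) • w l' = w k := by
        simp
      simp only [sub_smul, Finset.sum_sub_distrib, h1, h2, hDv k, sub_self]
    have := Fintype.linearIndependent_iff.mp hlinZ _ key l
    exact sub_eq_zero.mp this
  have hinj : ∀ y : Fin e → ℝ, (∀ i, ∑ k, (c i k : ℝ) * y k = 0) → y = 0 := by
    intro y hy
    funext k
    have h0 : ∑ l, ((∑ i, D k i * c i l : ℤ) : ℝ) * y l
        = ∑ i, (D k i : ℝ) * (∑ l, (c i l : ℝ) * y l) := by
      push_cast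
      simp only [Finset.sum_mul, Finset.mul_sum]
      rw [Finset.sum_comm]
      refine Finset.sum_congr rfl fun i _ => Finset.sum_congr rfl fun l _ => by ring
    have h1 : ∑ l, ((∑ i, D k i * c i l : ℤ) : ℝ) * y l = y k := by
      simp only [hDC k]
      simp [Finset.sum_ite_eq']
    have h2 : ∑ i, (D k i : ℝ) * (∑ l, (c i l : ℝ) * y l) = 0 := by
      simp only [hy, mul_zero, Finset.sum_const_zero]
    have hyk : y k = 0 := by rw [← h1, h0, h2]
    simpa using hyk
  set b : Matrix (Fin e) (Fin e) ℤ := fun k l => ∑ i, ∑ j, a i j * c i k * c j l with hbdef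
  have hbval : evalForm b w = α := by
    rw [hbdef, evalForm_subst a c w]
    rw [show (fun i => ∑ k, (c i k : K) * w k) = v from funext fun i => (hvmul i).symm]
    exact hval
  have hbpd : IsPosDefForm b := by
    intro y hy
    rw [show evalForm b y = evalForm a (fun i => ∑ k, (c i k : ℝ) * y k) from
      evalForm_subst a c y]
    refine ha _ fun h0 => hy (hinj y fun i => ?_)
    exact congrFun h0 i
  constructor
  · exact ⟨e, he, b, hbpd, w, hwO, hbval⟩
  · set a₀ : Matrix (Fin (Module.finrank ℚ K)) (Fin (Module.finrank ℚ K)) ℤ :=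
      fun i j => if hi : (i : ℕ) < e then
        if hj : (j : ℕ) < e then b ⟨i, hi⟩ ⟨j, hj⟩ else 0 else 0 with ha₀def
    set v₀ : Fin (Module.finrank ℚ K) → K :=
      fun i => if h : (i : ℕ) < e then w ⟨i, h⟩ else 0 with hv₀def
    refine ⟨a₀, ?_, v₀, ?_, ?_⟩
    · intro x
      rw [ha₀def, evalForm_pad he b x]
      by_cases hx : (fun k => x (Fin.castLE he k)) = 0
      · rw [hx]
        simp [evalForm]
      · exact le_of_lt (hbpd _ hx)
    · intro i
      rw [hv₀def]
      dsimp only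
      split
      · exact hwO _
      · exact O.zero_mem
    · have hv₀w : (fun k => v₀ (Fin.castLE he k)) = w := by
        funext k
        rw [hv₀def]
        simp [Fin.castLE]
      rw [ha₀def, evalForm_pad he b v₀, hv₀w]
      exact hbval


end
end

section
/- Let Q₀ be a d-ary positive semidefinite quadratic form with integer coefficients. Then there exists a positive definite quadratic form Q with integer coefficients of rank m ≤ d such that Q represents Q₀ over Z, i.e., there is a matrix X ∈ Z^(m×d) with M_{Q₀} = Xᵀ M_Q X, where M_{Q₀} and M_Q are the Gram matrices. -/
open scoped BigOperators
open NumberField Matrix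

noncomputable section

section Stmt6Aux
open Matrix

private lemma stmt6_dot_symm {K : Type*} [CommRing K] {r : ℕ} (G : Matrix (Fin r) (Fin r) K)
    (hs : Gᵀ = G) (u v : Fin r → K) : u ⬝ᵥ G *ᵥ v = v ⬝ᵥ G *ᵥ u := by
  rw [dotProduct_mulVec]
  conv_lhs => rw [← hs]
  rw [vecMul_transpose, dotProduct_comm]

private lemma stmt6_mulVec_dot {K : Type*} [CommRing K] {r s : ℕ}
    (A : Matrix (Fin r) (Fin s) K) (G : Matrix (Fin r) (Fin r) K) (u v : Fin s → K) :
    u ⬝ᵥ (Aᵀ * G * A) *ᵥ v = (A *ᵥ u) ⬝ᵥ G *ᵥ (A *ᵥ v) := by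
  rw [Matrix.mul_assoc, ← mulVec_mulVec, ← mulVec_mulVec, dotProduct_mulVec,
    vecMul_transpose]

private lemma stmt6_evalForm_eq_dot {r : ℕ} {K : Type*} [Field K] (f : ℚ →+* K)
    (a : Matrix (Fin r) (Fin r) ℤ) (v : Fin r → K) :
    evalForm a v = v ⬝ᵥ ((gramQ a).map f) *ᵥ v := by
  haveI : CharZero K := (RingHom.charZero_iff f.injective).mp inferInstance
  have hf : ∀ q : ℚ, f q = (q : K) := fun q => map_ratCast f q
  symm
  calc v ⬝ᵥ ((gramQ a).map f) *ᵥ v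
      = ∑ i, ∑ j, (2 : K)⁻¹ * ((a i j : K) * v i * v j + (a j i : K) * v i * v j) := by
        simp only [dotProduct, mulVec, gramQ, Matrix.map_apply, Matrix.smul_apply,
          Matrix.add_apply, Matrix.transpose_apply, smul_eq_mul, hf]
        push_cast
        rw [Finset.sum_congr rfl]
        intro i _
        rw [Finset.mul_sum, Finset.sum_congr rfl]
        intro j _
        ring
    _ = (2 : K)⁻¹ * ((∑ i, ∑ j, (a i j : K) * v i * v j)
          + ∑ i, ∑ j, (a j i : K) * v i * v j) := by
        rw [mul_add, Finset.mul_sum, Finset.mul_sum]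
        rw [← Finset.sum_add_distrib]
        refine Finset.sum_congr rfl fun i _ => ?_
        rw [Finset.mul_sum, Finset.mul_sum, ← Finset.sum_add_distrib]
        exact Finset.sum_congr rfl fun j _ => by ring
    _ = (2 : K)⁻¹ * ((∑ i, ∑ j, (a i j : K) * v i * v j)
          + ∑ i, ∑ j, (a i j : K) * v i * v j) := by
        congr 1
        congr 1
        rw [Finset.sum_comm]
        exact Finset.sum_congr rfl fun i _ => Finset.sum_congr rfl fun j _ => by ring
    _ = evalForm a v := by
        rw [evalForm]
        have h2 : (2 : K) ≠ 0 := two_ne_zero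
        field_simp
        ring

private lemma stmt6_psd_null {r : ℕ} {K : Type*} [Field K] [LinearOrder K] [IsStrictOrderedRing K]
    (G : Matrix (Fin r) (Fin r) K) (hs : Gᵀ = G)
    (hpsd : ∀ v : Fin r → K, 0 ≤ v ⬝ᵥ G *ᵥ v) {v : Fin r → K}
    (hv : v ⬝ᵥ G *ᵥ v = 0) : G *ᵥ v = 0 := by
  funext j
  simp only [Pi.zero_apply]
  set y : Fin r → K := Pi.single j 1 with hy
  set c : K := (G *ᵥ v) j with hc
  set g : K := G j j with hg
  have hyGy : y ⬝ᵥ G *ᵥ y = g := by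
    rw [hy, mulVec_single, single_dotProduct]
    simp [hg]
  have hyGv : y ⬝ᵥ G *ᵥ v = c := by
    rw [hy, single_dotProduct, one_mul]
  have hvGy : v ⬝ᵥ G *ᵥ y = c := by
    rw [stmt6_dot_symm G hs]; exact hyGv
  have hgnn : 0 ≤ g := by rw [← hyGy]; exact hpsd _
  have key : ∀ t : K, 0 ≤ 2 * t * c + t * t * g := by
    intro t
    have h := hpsd (v + t • y)
    rw [mulVec_add, mulVec_smul, dotProduct_add, add_dotProduct, add_dotProduct,
      dotProduct_smul, dotProduct_smul, smul_dotProduct, smul_dotProduct] at h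
    rw [hv, hyGv, hvGy, hyGy] at h
    simp only [smul_eq_mul] at h
    calc (0:K) ≤ 0 + t * c + (t * c + t * (t * g)) := h
      _ = 2 * t * c + t * t * g := by ring
  have hc0 : c = 0 := by
    rcases eq_or_lt_of_le hgnn with hg0 | hgpos
    · have h := key (-c)
      have : 2 * (-c) * c + (-c) * (-c) * g = -(2 * (c * c)) := by
        rw [← hg0]; ring
      rw [this] at h
      have : c * c = 0 := le_antisymm (by linarith) (mul_self_nonneg c)
      exact mul_self_eq_zero.mp this
    · have h := key (-(c / g))
      have hgne : g ≠ 0 := ne_of_gt hgpos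
      have he : 2 * (-(c / g)) * c + (-(c / g)) * (-(c / g)) * g = -(c * c) / g := by
        field_simp
        ring
      rw [he] at h
      have h2 : 0 ≤ -(c * c) := by
        have := mul_nonneg h (le_of_lt hgpos)
        rwa [div_mul_cancel₀ _ hgne] at this
      have : c * c = 0 := le_antisymm (by linarith) (mul_self_nonneg c)
      exact mul_self_eq_zero.mp this
  exact hc0

end Stmt6Aux

/-- Every `d`-ary positive semidefinite quadratic form `Q₀` with integer
coefficients is represented over `ℤ` by a positive definite integer quadratic form `Q` of
rank `m ≤ d`: there is `X ∈ ℤ^(m×d)` with `M_{Q₀} = Xᵀ M_Q X` (Gram matrices). -/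
theorem posSemidef_form_represented_by_posDef_form
    (d : ℕ) (a₀ : Matrix (Fin d) (Fin d) ℤ)
    (hpsd : ∀ v : Fin d → ℝ, 0 ≤ evalForm a₀ v) :
    ∃ m : ℕ, m ≤ d ∧ ∃ a : Matrix (Fin m) (Fin m) ℤ, IsPosDefForm a ∧
      ∃ X : Matrix (Fin m) (Fin d) ℤ,
        gramQ a₀ = (X.map (Int.cast : ℤ → ℚ))ᵀ * gramQ a * X.map (Int.cast : ℤ → ℚ) := by
  classical
  have hG₀symm : (gramQ a₀)ᵀ = gramQ a₀ := by
    rw [gramQ, Matrix.transpose_smul, Matrix.transpose_add, Matrix.transpose_transpose, add_comm]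
  set G₀ := gramQ a₀ with hG₀def
  -- positive semidefiniteness over ℝ of the Gram matrix
  have hpsdR : ∀ v : Fin d → ℝ, 0 ≤ v ⬝ᵥ (G₀.map (Rat.castHom ℝ)) *ᵥ v := by
    intro v
    have h := hpsd v
    rwa [stmt6_evalForm_eq_dot (Rat.castHom ℝ), ← hG₀def] at h
  -- positive semidefiniteness over ℚ
  have hpsdQ : ∀ v : Fin d → ℚ, 0 ≤ v ⬝ᵥ G₀ *ᵥ v := by
    intro v
    have hcast : ((v ⬝ᵥ G₀ *ᵥ v : ℚ) : ℝ)
        = ((Rat.castHom ℝ) ∘ v) ⬝ᵥ (G₀.map (Rat.castHom ℝ)) *ᵥ ((Rat.castHom ℝ) ∘ v) := by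
      rw [show ((v ⬝ᵥ G₀ *ᵥ v : ℚ) : ℝ) = (Rat.castHom ℝ) (v ⬝ᵥ G₀ *ᵥ v) from rfl,
        RingHom.map_dotProduct]
      congr 1
      funext i
      exact RingHom.map_mulVec _ _ _ i
    have h := hpsdR ((Rat.castHom ℝ) ∘ v)
    rw [← hcast] at h
    exact_mod_cast h
  -- the kernel sublattice
  let N : Submodule ℤ (Fin d → ℤ) :=
    { carrier := {x | G₀ *ᵥ (fun i => (x i : ℚ)) = 0}
      add_mem' := by
        intro x y hx hy
        simp only [Set.mem_setOf_eq] at *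
        have hxy : (fun i => (((x + y) i : ℤ) : ℚ))
            = (fun i => ((x i : ℚ))) + fun i => ((y i : ℚ)) := by
          funext i; simp
        rw [hxy, mulVec_add, hx, hy, add_zero]
      zero_mem' := by
        simp only [Set.mem_setOf_eq]
        have h0 : (fun i => (((0 : Fin d → ℤ) i : ℤ) : ℚ)) = (0 : Fin d → ℚ) := by
          funext i; simp
        rw [h0, mulVec_zero]
      smul_mem' := by
        intro c x hx
        simp only [Set.mem_setOf_eq] at *
        have hcx : (fun i => (((c • x) i : ℤ) : ℚ)) = (c : ℚ) • fun i => ((x i : ℚ)) := by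
          funext i
          show (((c • x) i : ℤ) : ℚ) = (c : ℚ) * (x i : ℚ)
          rw [Pi.smul_apply, smul_eq_mul]
          push_cast
          ring
        rw [hcx, mulVec_smul, hx, smul_zero] }
  have hNmem : ∀ x : Fin d → ℤ, x ∈ N ↔ G₀ *ᵥ (fun i => (x i : ℚ)) = 0 := fun x => Iff.rfl
  -- the quotient is finite free
  haveI hfin : Module.Finite ℤ ((Fin d → ℤ) ⧸ N) :=
    Module.Finite.of_surjective N.mkQ (Submodule.mkQ_surjective N)
  haveI : NoZeroSMulDivisors ℤ ((Fin d → ℤ) ⧸ N) := by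
    refine ⟨fun {c x} hcx => ?_⟩
    rcases eq_or_ne c 0 with rfl | hc
    · exact Or.inl rfl
    refine Or.inr ?_
    obtain ⟨y, rfl⟩ := Submodule.mkQ_surjective N x
    rw [← _root_.map_smul, Submodule.mkQ_apply, Submodule.Quotient.mk_eq_zero] at hcx
    rw [Submodule.mkQ_apply, Submodule.Quotient.mk_eq_zero]
    have h1 : G₀ *ᵥ (fun i => (((c • y) i : ℤ) : ℚ)) = 0 := hcx
    have h2 : (fun i => (((c • y) i : ℤ) : ℚ)) = (c : ℚ) • fun i => ((y i : ℚ)) := by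
      funext i
      show (((c • y) i : ℤ) : ℚ) = (c : ℚ) * (y i : ℚ)
      rw [Pi.smul_apply, smul_eq_mul]
      push_cast
      ring
    rw [h2, mulVec_smul, smul_eq_zero] at h1
    rcases h1 with h1 | h1
    · exact absurd (by exact_mod_cast h1) hc
    · exact h1
  haveI : Module.Free ℤ ((Fin d → ℤ) ⧸ N) := Module.free_of_finite_type_torsion_free'
  -- choose a basis of the quotient
  let ι := Module.Free.ChooseBasisIndex ℤ ((Fin d → ℤ) ⧸ N)
  let b₀ : Module.Basis ι ℤ ((Fin d → ℤ) ⧸ N) := Module.Free.chooseBasis ℤ _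
  let m := Fintype.card ι
  let b : Module.Basis (Fin m) ℤ ((Fin d → ℤ) ⧸ N) := b₀.reindex (Fintype.equivFin ι)
  have hmd : m ≤ d := by
    have h1 : Module.finrank ℤ ((Fin d → ℤ) ⧸ N) = m := Module.finrank_eq_card_basis b₀
    have h2 : Module.finrank ℤ (Fin d → ℤ) = d := Module.finrank_fin_fun (R := ℤ)
    have h3 := Submodule.finrank_quotient_le N
    omega
  -- lift the basis vectors
  choose w hw using fun i : Fin m => Submodule.mkQ_surjective N (b i)
  let W : Matrix (Fin d) (Fin m) ℤ := Matrix.of fun k i => w i k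
  let Wq : Matrix (Fin d) (Fin m) ℚ := W.map (Int.cast : ℤ → ℚ)
  let G' : Matrix (Fin m) (Fin m) ℚ := Wqᵀ * G₀ * Wq
  have hG'def : G' = Wqᵀ * G₀ * Wq := rfl
  have hG'symm : G'ᵀ = G' := by
    rw [hG'def, Matrix.transpose_mul, Matrix.transpose_mul, Matrix.transpose_transpose,
      hG₀symm, ← Matrix.mul_assoc]
  have hentry : ∀ {p q : ℕ} (M : Matrix (Fin p) (Fin q) ℚ) (j : Fin p) (k : Fin q),
      (Pi.single j (1:ℚ)) ⬝ᵥ M *ᵥ (Pi.single k (1:ℚ)) = M j k := by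
    intro p q M j k
    rw [mulVec_single, single_dotProduct]
    simp
  have hsingle : ∀ (j : Fin d),
      (fun t => (((Pi.single j 1 : Fin d → ℤ) t : ℤ) : ℚ)) = Pi.single j (1:ℚ) := by
    intro j
    funext t
    simp [Pi.single_apply]
  have hWcol : ∀ i : Fin m, Wq *ᵥ (Pi.single i (1:ℚ)) = fun k => ((w i k : ℤ) : ℚ) := by
    intro i
    rw [mulVec_single]
    funext k
    simp [Wq, W]
  have hG'entry : ∀ i j : Fin m,
      G' i j = (fun k => ((w i k : ℤ) : ℚ)) ⬝ᵥ G₀ *ᵥ (fun k => ((w j k : ℤ) : ℚ)) := by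
    intro i j
    rw [← hentry G' i j, hG'def, stmt6_mulVec_dot, hWcol, hWcol]
  -- positive semidefiniteness of G'
  have hG'psdQ : ∀ u : Fin m → ℚ, 0 ≤ u ⬝ᵥ G' *ᵥ u := by
    intro u
    rw [hG'def, stmt6_mulVec_dot]
    exact hpsdQ _
  -- G' is nondegenerate
  have hdet : G'.det ≠ 0 := by
    intro hdet0
    obtain ⟨u, hu, hGu⟩ := Matrix.exists_mulVec_eq_zero_iff.mpr hdet0
    have huq : (Wq *ᵥ u) ⬝ᵥ G₀ *ᵥ (Wq *ᵥ u) = 0 := by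
      rw [← stmt6_mulVec_dot, ← hG'def, hGu, dotProduct_zero]
    have hker : G₀ *ᵥ (Wq *ᵥ u) = 0 := stmt6_psd_null G₀ hG₀symm hpsdQ huq
    set n : ℤ := ∏ i, ((u i).den : ℤ) with hn_def
    have hn : n ≠ 0 := by
      rw [hn_def]
      refine Finset.prod_ne_zero_iff.mpr fun i _ => ?_
      exact_mod_cast (u i).den_nz
    let z : Fin m → ℤ := fun i => (n / ((u i).den : ℤ)) * (u i).num
    have hz : ∀ i, ((z i : ℤ) : ℚ) = (n : ℚ) * u i := by
      intro i
      obtain ⟨t, ht⟩ := Finset.dvd_prod_of_mem (fun i => ((u i).den : ℤ)) (Finset.mem_univ i)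
      have hden : ((u i).den : ℤ) ≠ 0 := by exact_mod_cast (u i).den_nz
      have hdiv : n / ((u i).den : ℤ) = t := by
        rw [hn_def, ht, Int.mul_ediv_cancel_left _ hden]
      have hdq : ((u i).den : ℚ) ≠ 0 := by
        exact_mod_cast hden
      have hnum : ((u i).num : ℚ) = u i * ((u i).den : ℚ) := by
        exact (div_eq_iff hdq).mp (Rat.num_div_den (u i))
      have hzi : z i = t * (u i).num := by
        show (n / ((u i).den : ℤ)) * (u i).num = t * (u i).num
        rw [hdiv]
      rw [hzi, hn_def, ht]
      push_cast
      rw [hnum]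
      ring
    have hy : (fun k => (((W *ᵥ z) k : ℤ) : ℚ)) = (n : ℚ) • (Wq *ᵥ u) := by
      funext k
      simp only [mulVec, dotProduct, Pi.smul_apply, smul_eq_mul]
      push_cast
      rw [Finset.mul_sum]
      refine Finset.sum_congr rfl fun i _ => ?_
      rw [hz i]
      show ((W k i : ℤ) : ℚ) * ((n:ℚ) * u i) = (n:ℚ) * (Wq k i * u i)
      have : Wq k i = ((W k i : ℤ) : ℚ) := rfl
      rw [this]; ring
    have hmem : W *ᵥ z ∈ N := by
      rw [hNmem, hy, mulVec_smul, hker, smul_zero]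
    have hπ : N.mkQ (W *ᵥ z) = ∑ i, z i • b i := by
      have hWz : W *ᵥ z = ∑ i, z i • w i := by
        funext k
        simp only [mulVec, dotProduct, Finset.sum_apply, Pi.smul_apply, smul_eq_mul]
        refine Finset.sum_congr rfl fun i _ => ?_
        show W k i * z i = z i * w i k
        have : W k i = w i k := rfl
        rw [this]; ring
      rw [hWz, map_sum]
      refine Finset.sum_congr rfl fun i _ => ?_
      rw [_root_.map_smul, hw i]
    have hz0 : ∀ i, z i = 0 := by
      have h0 : ∑ i, z i • b i = 0 := by
        rw [← hπ, Submodule.mkQ_apply, Submodule.Quotient.mk_eq_zero]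
        exact hmem
      exact Fintype.linearIndependent_iff.mp b.linearIndependent z h0
    apply hu
    funext i
    have h1 : (n : ℚ) * u i = 0 := by
      rw [← hz i, hz0 i]
      norm_num
    have hnq : (n : ℚ) ≠ 0 := by exact_mod_cast hn
    have := (mul_eq_zero.mp h1).resolve_left hnq
    simpa using this
  -- the integral matrix of the induced form
  let a : Matrix (Fin m) (Fin m) ℤ := Matrix.of fun i j =>
    if i = j then evalForm a₀ (w i)
    else if (i : ℕ) < (j : ℕ) then w i ⬝ᵥ (a₀ + a₀ᵀ) *ᵥ w j else 0
  -- cast of the off-diagonal integer products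
  have hAA : (a₀ + a₀ᵀ).map (Int.cast : ℤ → ℚ) = (2 : ℚ) • G₀ := by
    ext k l
    rw [hG₀def, gramQ]
    simp only [Matrix.map_apply, Matrix.add_apply, Matrix.transpose_apply, Matrix.smul_apply,
      smul_eq_mul]
    push_cast
    ring
  have hcastdot : ∀ i j : Fin m, ((w i ⬝ᵥ (a₀ + a₀ᵀ) *ᵥ w j : ℤ) : ℚ) = 2 * G' i j := by
    intro i j
    rw [show ((w i ⬝ᵥ (a₀ + a₀ᵀ) *ᵥ w j : ℤ) : ℚ)
        = (Int.castRingHom ℚ) (w i ⬝ᵥ (a₀ + a₀ᵀ) *ᵥ w j) from rfl,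
      RingHom.map_dotProduct]
    have hmv : (Int.castRingHom ℚ) ∘ ((a₀ + a₀ᵀ) *ᵥ w j)
        = ((a₀ + a₀ᵀ).map (Int.cast : ℤ → ℚ)) *ᵥ ((Int.castRingHom ℚ) ∘ w j) := by
      funext k
      exact RingHom.map_mulVec _ _ _ k
    rw [hmv, hAA, smul_mulVec, dotProduct_smul, smul_eq_mul]
    congr 1
    rw [hG'entry i j]
    rfl
  have hdiag : ∀ i : Fin m, ((evalForm a₀ (w i) : ℤ) : ℚ) = G' i i := by
    intro i
    have h1 : ((evalForm a₀ (w i) : ℤ) : ℚ) = evalForm a₀ (fun k => ((w i k : ℤ) : ℚ)) := by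
      simp only [evalForm]
      push_cast
      rfl
    rw [h1, stmt6_evalForm_eq_dot (RingHom.id ℚ)]
    have hmapid : G₀.map (⇑(RingHom.id ℚ)) = G₀ := by
      ext k l
      simp
    rw [hmapid, hG'entry i i]
  have hG'symm' : ∀ i j : Fin m, G' j i = G' i j := by
    intro i j
    exact congrFun (congrFun hG'symm i) j
  -- gramQ a = G'
  have hga : gramQ a = G' := by
    ext i j
    rw [gramQ]
    simp only [Matrix.smul_apply, Matrix.add_apply, Matrix.map_apply, Matrix.transpose_apply,
      smul_eq_mul]
    rcases lt_trichotomy (i : ℕ) (j : ℕ) with h | h | h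
    · have hne : i ≠ j := fun he => by rw [he] at h; omega
      have hne' : j ≠ i := fun he => hne he.symm
      have hnlt : ¬ ((j : ℕ) < (i : ℕ)) := by omega
      have ha1 : a i j = w i ⬝ᵥ (a₀ + a₀ᵀ) *ᵥ w j := by
        show (if i = j then _ else if (i:ℕ) < (j:ℕ) then _ else _) = _
        rw [if_neg hne, if_pos h]
      have ha2 : a j i = 0 := by
        show (if j = i then _ else if (j:ℕ) < (i:ℕ) then _ else _) = _
        rw [if_neg hne', if_neg hnlt]
      rw [ha1, ha2, hcastdot i j]
      push_cast
      ring
    · have he : i = j := Fin.ext h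
      subst he
      have ha1 : a i i = evalForm a₀ (w i) := by
        show (if i = i then _ else _) = _
        rw [if_pos rfl]
      rw [ha1, hdiag i]
      ring
    · have hne : i ≠ j := fun he => by rw [he] at h; omega
      have hne' : j ≠ i := fun he => hne he.symm
      have hnlt : ¬ ((i : ℕ) < (j : ℕ)) := by omega
      have ha1 : a i j = 0 := by
        show (if i = j then _ else if (i:ℕ) < (j:ℕ) then _ else _) = _
        rw [if_neg hne, if_neg hnlt]
      have ha2 : a j i = w j ⬝ᵥ (a₀ + a₀ᵀ) *ᵥ w i := by
        show (if j = i then _ else if (j:ℕ) < (i:ℕ) then _ else _) = _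
        rw [if_neg hne', if_pos h]
      rw [ha1, ha2, hcastdot j i, hG'symm' j i]
      push_cast
      ring
  -- positive definiteness
  have hPD : IsPosDefForm a := by
    intro v hv
    rw [stmt6_evalForm_eq_dot (Rat.castHom ℝ), hga]
    set Gr : Matrix (Fin m) (Fin m) ℝ := G'.map (Rat.castHom ℝ) with hGr_def
    have hGrsymm : Grᵀ = Gr := by
      rw [hGr_def, ← Matrix.transpose_map, hG'symm]
    have hGrpsd : ∀ vR : Fin m → ℝ, 0 ≤ vR ⬝ᵥ Gr *ᵥ vR := by
      intro vR
      have hGr2 : Gr = (Wq.map (Rat.castHom ℝ))ᵀ * (G₀.map (Rat.castHom ℝ))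
          * (Wq.map (Rat.castHom ℝ)) := by
        rw [hGr_def, hG'def, Matrix.map_mul, Matrix.map_mul, Matrix.transpose_map]
      rw [hGr2, stmt6_mulVec_dot]
      exact hpsdR _
    have hdetR : Gr.det ≠ 0 := by
      rw [hGr_def, ← RingHom.mapMatrix_apply, ← RingHom.map_det]
      simpa using hdet
    rcases lt_or_eq_of_le (hGrpsd v) with hlt | heq
    · exact hlt
    · exfalso
      have hker : Gr *ᵥ v = 0 := stmt6_psd_null Gr hGrsymm hGrpsd heq.symm
      exact hdetR (Matrix.exists_mulVec_eq_zero_iff.mp ⟨v, hv, hker⟩)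
  -- the representation matrix
  let X : Matrix (Fin m) (Fin d) ℤ := Matrix.of fun i j => b.repr (N.mkQ (Pi.single j 1)) i
  let Xq : Matrix (Fin m) (Fin d) ℚ := X.map (Int.cast : ℤ → ℚ)
  let cc : (Fin d → ℤ) → (Fin m → ℚ) := fun y i => ((b.repr (N.mkQ y) i : ℤ) : ℚ)
  have hlift : ∀ y : Fin d → ℤ, G₀ *ᵥ (Wq *ᵥ cc y) = G₀ *ᵥ (fun k => ((y k : ℤ) : ℚ)) := by
    intro y
    have hl : Wq *ᵥ cc y = fun k => (((∑ i, b.repr (N.mkQ y) i • w i) k : ℤ) : ℚ) := by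
      funext k
      simp only [mulVec, dotProduct, Finset.sum_apply, Pi.smul_apply, smul_eq_mul]
      push_cast
      refine Finset.sum_congr rfl fun i _ => ?_
      show Wq k i * cc y i = _
      have h1 : Wq k i = ((w i k : ℤ) : ℚ) := rfl
      rw [h1]
      show _ = ((b.repr (N.mkQ y) i : ℤ) : ℚ) * ((w i k : ℤ) : ℚ)
      ring
    have hmem : (∑ i, b.repr (N.mkQ y) i • w i) - y ∈ N := by
      have hQ : N.mkQ ((∑ i, b.repr (N.mkQ y) i • w i) - y) = 0 := by
        rw [map_sub]
        have : N.mkQ (∑ i, b.repr (N.mkQ y) i • w i) = N.mkQ y := by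
          rw [map_sum]
          calc ∑ i, N.mkQ (b.repr (N.mkQ y) i • w i)
              = ∑ i, b.repr (N.mkQ y) i • b i := by
                refine Finset.sum_congr rfl fun i _ => ?_
                rw [_root_.map_smul, hw i]
            _ = N.mkQ y := b.sum_repr _
        rw [this, sub_self]
      rwa [Submodule.mkQ_apply, Submodule.Quotient.mk_eq_zero] at hQ
    have hker := (hNmem _).mp hmem
    have hsub : (fun k => ((((∑ i, b.repr (N.mkQ y) i • w i) - y) k : ℤ) : ℚ))
        = (fun k => (((∑ i, b.repr (N.mkQ y) i • w i) k : ℤ) : ℚ))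
          - fun k => ((y k : ℤ) : ℚ) := by
      funext k
      simp
    rw [hsub, mulVec_sub, sub_eq_zero] at hker
    rw [hl, hker]
  have hbil : ∀ y z : Fin d → ℤ,
      (fun k => ((y k : ℤ) : ℚ)) ⬝ᵥ G₀ *ᵥ (fun k => ((z k : ℤ) : ℚ))
        = cc y ⬝ᵥ G' *ᵥ cc z := by
    intro y z
    calc (fun k => ((y k : ℤ) : ℚ)) ⬝ᵥ G₀ *ᵥ (fun k => ((z k : ℤ) : ℚ))
        = (fun k => ((y k : ℤ) : ℚ)) ⬝ᵥ G₀ *ᵥ (Wq *ᵥ cc z) := by rw [hlift]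
      _ = (Wq *ᵥ cc z) ⬝ᵥ G₀ *ᵥ (fun k => ((y k : ℤ) : ℚ)) := stmt6_dot_symm G₀ hG₀symm _ _
      _ = (Wq *ᵥ cc z) ⬝ᵥ G₀ *ᵥ (Wq *ᵥ cc y) := by rw [hlift]
      _ = (Wq *ᵥ cc y) ⬝ᵥ G₀ *ᵥ (Wq *ᵥ cc z) := stmt6_dot_symm G₀ hG₀symm _ _
      _ = cc y ⬝ᵥ G' *ᵥ cc z := by rw [← stmt6_mulVec_dot, ← hG'def]
  have hXcol : ∀ j : Fin d, Xq *ᵥ (Pi.single j (1:ℚ)) = cc (Pi.single j 1) := by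
    intro j
    rw [mulVec_single]
    funext i
    show Xq i j * 1 = cc (Pi.single j 1) i
    have : Xq i j = ((b.repr (N.mkQ (Pi.single j 1)) i : ℤ) : ℚ) := rfl
    rw [this, mul_one]
  have hmain : G₀ = Xqᵀ * G' * Xq := by
    ext j k
    calc G₀ j k
        = (Pi.single j (1:ℚ)) ⬝ᵥ G₀ *ᵥ (Pi.single k (1:ℚ)) := (hentry G₀ j k).symm
      _ = (fun t => (((Pi.single j 1 : Fin d → ℤ) t : ℤ) : ℚ)) ⬝ᵥ G₀ *ᵥ
            (fun t => (((Pi.single k 1 : Fin d → ℤ) t : ℤ) : ℚ)) := by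
          rw [hsingle j, hsingle k]
      _ = cc (Pi.single j 1) ⬝ᵥ G' *ᵥ cc (Pi.single k 1) := hbil _ _
      _ = (Xq *ᵥ Pi.single j (1:ℚ)) ⬝ᵥ G' *ᵥ (Xq *ᵥ Pi.single k (1:ℚ)) := by
          rw [hXcol j, hXcol k]
      _ = (Pi.single j (1:ℚ)) ⬝ᵥ (Xqᵀ * G' * Xq) *ᵥ (Pi.single k (1:ℚ)) :=
          (stmt6_mulVec_dot Xq G' _ _).symm
      _ = (Xqᵀ * G' * Xq) j k := hentry _ j k
  refine ⟨m, hmd, a, hPD, X, ?_⟩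
  rw [hga]
  exact hmain

end
end

section
/- Let K be a totally real number field of degree d with ring of integers O_K and fixed integral basis ω₁,…,ω_d, let Q be a Z-form of rank r, and let δ ∈ O_K^{∨,+} be such that the form t_δ is of E-type. Assume an indecomposable element α ∈ O_K^+ is represented by Q over O_K and satisfies Tr_{K/Q}(δα) = min(t_δ ⊗ Q). Then α is a square in O_K and min(Q) = 1. -/
open scoped BigOperators
open NumberField Matrix

noncomputable section

-- AUX SECTION (to be inserted before the theorem)

lemma quad_expand {ι : Type*} [Fintype ι] (G : Matrix ι ι ℚ) (y : ι → ℚ) :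
    dotProduct y (G.mulVec y) = ∑ i, ∑ j, y i * G i j * y j := by
  simp [dotProduct, Matrix.mulVec, Finset.mul_sum, mul_assoc]

lemma qVal_expand {ι : Type*} [Fintype ι] (G : Matrix ι ι ℚ) (v : ι → ℤ) :
    qVal G v = ∑ i, ∑ j, (v i : ℚ) * G i j * (v j : ℚ) := quad_expand G _

lemma qVal_transpose {ι : Type*} [Fintype ι] (G : Matrix ι ι ℚ) (v : ι → ℤ) :
    qVal Gᵀ v = qVal G v := by
  rw [qVal_expand, qVal_expand, Finset.sum_comm]
  exact Finset.sum_congr rfl fun i _ => Finset.sum_congr rfl fun j _ => by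
    rw [Matrix.transpose_apply]; ring

lemma qVal_add {ι : Type*} [Fintype ι] (G H : Matrix ι ι ℚ) (v : ι → ℤ) :
    qVal (G + H) v = qVal G v + qVal H v := by
  simp [qVal_expand, Finset.sum_add_distrib, mul_add, add_mul]

lemma qVal_smul {ι : Type*} [Fintype ι] (c : ℚ) (G : Matrix ι ι ℚ) (v : ι → ℤ) :
    qVal (c • G) v = c * qVal G v := by
  simp only [qVal_expand, Finset.mul_sum, Matrix.smul_apply, smul_eq_mul]
  exact Finset.sum_congr rfl fun i _ => Finset.sum_congr rfl fun j _ => by ring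

lemma qVal_gramQ {r : ℕ} (a : Matrix (Fin r) (Fin r) ℤ) (v : Fin r → ℤ) :
    qVal (gramQ a) v = ((evalForm a v : ℤ) : ℚ) := by
  rw [gramQ, qVal_smul, qVal_add, qVal_transpose]
  have : qVal (a.map (Int.cast : ℤ → ℚ)) v = ((evalForm a v : ℤ) : ℚ) := by
    rw [qVal_expand, evalForm]
    push_cast
    exact Finset.sum_congr rfl fun i _ => Finset.sum_congr rfl fun j _ => by
      rw [Matrix.map_apply]; ring
  rw [this]; ring

lemma evalForm_pos_rat {r : ℕ} {a : Matrix (Fin r) (Fin r) ℤ} (ha : IsPosDefForm a)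
    (y : Fin r → ℚ) (hy : y ≠ 0) : 0 < evalForm a y := by
  have h : ((evalForm a y : ℚ) : ℝ) = evalForm a (fun i => (y i : ℝ)) := by
    rw [evalForm, evalForm]; push_cast; ring
  have hy' : (fun i => (y i : ℝ)) ≠ 0 := by
    intro h0; apply hy; funext i
    have := congrFun h0 i
    simp only [Pi.zero_apply] at this ⊢
    exact_mod_cast this
  have := ha _ hy'
  rw [← h] at this
  exact_mod_cast this

lemma evalForm_one_le {r : ℕ} {a : Matrix (Fin r) (Fin r) ℤ} (ha : IsPosDefForm a)
    (v : Fin r → ℤ) (hv : v ≠ 0) : 1 ≤ evalForm a v := by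
  have h : ((evalForm a v : ℤ) : ℚ) = evalForm a (fun i => (v i : ℚ)) := by
    rw [evalForm, evalForm]; push_cast; ring
  have hv' : (fun i => (v i : ℚ)) ≠ 0 := by
    intro h0; apply hv; funext i
    have := congrFun h0 i
    simp only [Pi.zero_apply] at this ⊢
    exact_mod_cast this
  have h2 := evalForm_pos_rat ha _ hv'
  rw [← h] at h2
  have h3 : 0 < evalForm a v := by exact_mod_cast h2
  omega

lemma minVecs_two_smul {ι : Type*} [Fintype ι] (G : Matrix ι ι ℚ) :
    MinVecs ((2 : ℚ) • G) = MinVecs G := by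
  ext v
  simp only [MinVecs, Set.mem_setOf_eq, qVal_smul]
  constructor
  · rintro ⟨h0, h⟩; exact ⟨h0, fun w hw => by have := h w hw; linarith⟩
  · rintro ⟨h0, h⟩; exact ⟨h0, fun w hw => by have := h w hw; linarith⟩

lemma kron_two_smul {ι κ : Type*} (G : Matrix ι ι ℚ) (H : Matrix κ κ ℚ) :
    Matrix.kroneckerMap (· * ·) G ((2 : ℚ) • H) =
      (2 : ℚ) • Matrix.kroneckerMap (· * ·) G H := by
  ext p q
  simp [Matrix.kroneckerMap_apply]
  ring

lemma coe_int_OK (K : Type*) [Field K] [NumberField K] (n : ℤ) :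
    ((n : 𝓞 K) : K) = (n : K) := rfl

lemma exists_real_emb (K : Type*) [Field K] [NumberField K] (htr : IsTotallyRealField K) :
    Nonempty (K →+* ℝ) := by
  obtain ⟨φ⟩ : Nonempty (K →+* ℂ) := inferInstance
  refine ⟨RingHom.mk' ⟨⟨fun x => (φ x).re, by simp⟩, fun x y => ?_⟩ (fun x y => by simp)⟩
  have hx := htr φ x
  have hy := htr φ y
  simp [Complex.mul_re, hx, hy]

lemma sum_reorder4 {M : Type*} [AddCommMonoid M] {A B C D : Type*}
    [Fintype A] [Fintype B] [Fintype C] [Fintype D] (f : A → B → C → D → M) :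
    ∑ i : A, ∑ k : B, ∑ j : C, ∑ l : D, f i k j l
      = ∑ k : B, ∑ l : D, ∑ i : A, ∑ j : C, f i k j l := by
  rw [Finset.sum_comm]
  refine Finset.sum_congr rfl fun k _ => ?_
  calc ∑ i : A, ∑ j : C, ∑ l : D, f i k j l
      = ∑ i : A, ∑ l : D, ∑ j : C, f i k j l :=
        Finset.sum_congr rfl fun i _ => Finset.sum_comm
    _ = ∑ l : D, ∑ i : A, ∑ j : C, f i k j l := Finset.sum_comm

lemma inner_expand (K : Type*) [Field K] [NumberField K] {d : ℕ} (δ : K) (e : Fin d → K)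
    (c : ℚ) (y z : K) (f g : Fin d → ℚ) (hy : y = ∑ i, f i • e i) (hz : z = ∑ j, g j • e j) :
    δ * (algebraMap ℚ K c * y * z) = ∑ i, ∑ j, (c * f i * g j) • (δ * e i * e j) := by
  subst hy hz
  simp only [Finset.mul_sum, Finset.sum_mul]
  rw [Finset.sum_comm]
  refine Finset.sum_congr rfl fun i _ => Finset.sum_congr rfl fun j _ => ?_
  rw [← Algebra.smul_def]
  simp only [smul_mul_assoc, mul_smul_comm, smul_smul]
  rw [mul_assoc]
  ring_nf

lemma trace_eval (K : Type*) [Field K] [NumberField K] {d r : ℕ}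
    (ω : Module.Basis (Fin d) ℤ (𝓞 K)) (δ : K) (a : Matrix (Fin r) (Fin r) ℤ) (w : Fin r → 𝓞 K) :
    Algebra.trace ℚ K (δ * ((evalForm a w : 𝓞 K) : K)) =
      ∑ k, ∑ l, ∑ i, ∑ j,
        ((a k l : ℚ) * (ω.repr (w k) i : ℚ) * (ω.repr (w l) j : ℚ)) * traceFormMat K ω δ i j := by
  have hw : ∀ k, ((w k : 𝓞 K) : K) = ∑ i, (ω.repr (w k) i : ℚ) • ((ω i : 𝓞 K) : K) := by
    intro k
    conv_lhs => rw [← ω.sum_repr (w k)]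
    push_cast [Int.cast_smul_eq_zsmul]
    rfl
  have h1 : δ * ((evalForm a w : 𝓞 K) : K) =
      ∑ k, ∑ l, ∑ i, ∑ j,
        ((a k l : ℚ) * (ω.repr (w k) i : ℚ) * (ω.repr (w l) j : ℚ)) •
          (δ * ((ω i : 𝓞 K) : K) * ((ω j : 𝓞 K) : K)) := by
    rw [evalForm]
    push_cast
    rw [Finset.mul_sum]
    refine Finset.sum_congr rfl fun k _ => ?_
    rw [Finset.mul_sum]
    refine Finset.sum_congr rfl fun l _ => ?_
    have := inner_expand K δ (fun i => ((ω i : 𝓞 K) : K)) ((a k l : ℚ))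
      _ _ _ _ (hw k) (hw l)
    rw [← this]
    norm_num [eq_ratCast]
  rw [h1]
  simp only [map_sum, LinearMap.map_smul, smul_eq_mul, traceFormMat]

lemma qVal_kron_map {d r : ℕ} (G : Matrix (Fin d) (Fin d) ℚ) (a : Matrix (Fin r) (Fin r) ℤ)
    (x : Fin d × Fin r → ℤ) :
    qVal (Matrix.kroneckerMap (· * ·) G (a.map (Int.cast : ℤ → ℚ))) x
      = ∑ k, ∑ l, ∑ i, ∑ j, (x (i, k) : ℚ) * (G i j * (a k l : ℚ)) * (x (j, l) : ℚ) := by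
  rw [qVal_expand]
  rw [Fintype.sum_prod_type]
  simp only [Fintype.sum_prod_type]
  rw [← sum_reorder4 (fun i k j l => (x (i, k) : ℚ) * (G i j * (a k l : ℚ)) * (x (j, l) : ℚ))]
  exact Finset.sum_congr rfl fun i _ => Finset.sum_congr rfl fun k _ =>
    Finset.sum_congr rfl fun j _ => Finset.sum_congr rfl fun l _ => by
      simp [Matrix.kroneckerMap_apply, Matrix.map_apply]

lemma qVal_kron_gramQ {d r : ℕ} (G : Matrix (Fin d) (Fin d) ℚ) (hG : Gᵀ = G)
    (a : Matrix (Fin r) (Fin r) ℤ) (x : Fin d × Fin r → ℤ) :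
    qVal (Matrix.kroneckerMap (· * ·) G (gramQ a)) x
      = qVal (Matrix.kroneckerMap (· * ·) G (a.map (Int.cast : ℤ → ℚ))) x := by
  have h1 : Matrix.kroneckerMap (· * ·) G (gramQ a) =
      (2 : ℚ)⁻¹ • (Matrix.kroneckerMap (· * ·) G (a.map (Int.cast : ℤ → ℚ)) +
        Matrix.kroneckerMap (· * ·) G ((a.map (Int.cast : ℤ → ℚ))ᵀ)) := by
    ext p q
    simp [gramQ, Matrix.kroneckerMap_apply]
    ring
  have h2 : Matrix.kroneckerMap (· * ·) G ((a.map (Int.cast : ℤ → ℚ))ᵀ) =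
      (Matrix.kroneckerMap (· * ·) G (a.map (Int.cast : ℤ → ℚ)))ᵀ := by
    ext p q
    have hg : G p.1 q.1 = G q.1 p.1 := by
      have := congrFun (congrFun hG q.1) p.1; simpa using this
    simp [Matrix.kroneckerMap_apply, Matrix.transpose_apply, hg]
  rw [h1, h2, qVal_smul, qVal_add, qVal_transpose]
  ring

lemma traceFormMat_symm (K : Type*) [Field K] [NumberField K] {d : ℕ}
    (ω : Module.Basis (Fin d) ℤ (𝓞 K)) (δ : K) : (traceFormMat K ω δ)ᵀ = traceFormMat K ω δ := by
  ext i j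
  simp only [Matrix.transpose_apply, traceFormMat]
  congr 1
  ring

lemma master_identity (K : Type*) [Field K] [NumberField K] {d r : ℕ}
    (ω : Module.Basis (Fin d) ℤ (𝓞 K)) (δ : K) (a : Matrix (Fin r) (Fin r) ℤ) (w : Fin r → 𝓞 K) :
    Algebra.trace ℚ K (δ * ((evalForm a w : 𝓞 K) : K)) =
      qVal (Matrix.kroneckerMap (· * ·) (traceFormMat K ω δ) (gramQ a))
        (fun p => ω.repr (w p.2) p.1) := by
  rw [qVal_kron_gramQ _ (traceFormMat_symm K ω δ), qVal_kron_map, trace_eval K ω δ a w]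
  exact Finset.sum_congr rfl fun k _ => Finset.sum_congr rfl fun l _ =>
    Finset.sum_congr rfl fun i _ => Finset.sum_congr rfl fun j _ => by ring


/-- Let `δ` be a totally positive element of the codifferent such that the
twisted trace form `t_δ` is of `E`-type, and let `Q` be a `ℤ`-form. If an indecomposable
totally positive integer `α` is represented by `Q` over `O_K` and
`Tr(δα) = min(t_δ ⊗ Q)`, then `α` is a square in `O_K` and `min(Q) = 1`. -/
theorem indecomposable_at_minimum_is_square
    (K : Type*) [Field K] [NumberField K]
    (htr : IsTotallyRealField K)
    (d : ℕ) (ω : Module.Basis (Fin d) ℤ (𝓞 K))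
    (δ : K) (hδ : δ ∈ Codifferent K) (hδpos : TotallyPositive δ)
    (hE : IsEType (traceFormMat K ω δ))
    (r : ℕ) (a : Matrix (Fin r) (Fin r) ℤ) (ha : IsPosDefForm a)
    (α : 𝓞 K) (hαpos : TotallyPositive (α : K))
    (hind : ¬ ∃ β γ : 𝓞 K, TotallyPositive (β : K) ∧ TotallyPositive (γ : K) ∧ α = β + γ)
    (hrep : ∃ v : Fin r → 𝓞 K, evalForm a v = α)
    (hmin : IsLatMin (Matrix.kroneckerMap (· * ·) (traceFormMat K ω δ) (gramQ a))
      (Algebra.trace ℚ K (δ * (α : K)))) :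
    (∃ γ : 𝓞 K, α = γ ^ 2) ∧ IsLatMin (gramQ a) 1 := by
  obtain ⟨w, hw⟩ := hrep
  obtain ⟨ψ⟩ := exists_real_emb K htr
  set G := traceFormMat K ω δ with hGdef
  set x : Fin d × Fin r → ℤ := fun p => ω.repr (w p.2) p.1 with hxdef
  have hαne : α ≠ 0 := by
    intro h0
    have h1 := hαpos ψ
    rw [h0] at h1
    simp at h1
  have hxne : x ≠ 0 := by
    intro h0
    apply hαne
    rw [← hw]
    have hwz : w = 0 := by
      funext k
      have hr0 : ω.repr (w k) = 0 := by
        ext i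
        have := congrFun h0 (i, k)
        simpa [hxdef] using this
      exact ω.repr.map_eq_zero_iff.mp hr0
    rw [hwz]
    simp [evalForm]
  have hxval : qVal (Matrix.kroneckerMap (· * ·) G (gramQ a)) x
      = Algebra.trace ℚ K (δ * (α : K)) := by
    have h1 := master_identity K ω δ a w
    rw [hw] at h1
    rw [← hxdef] at h1
    exact h1.symm
  have hxmem : x ∈ MinVecs (Matrix.kroneckerMap (· * ·) G (gramQ a)) :=
    ⟨hxne, fun y hy => by rw [hxval]; exact hmin.2 y hy⟩
  have hNmap : (a + aᵀ).map (Int.cast : ℤ → ℚ) = (2 : ℚ) • gramQ a := by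
    ext k l
    simp only [Matrix.map_apply, Matrix.add_apply, Matrix.transpose_apply, gramQ,
      Matrix.smul_apply, smul_eq_mul]
    push_cast
    ring
  have hNsymm : (a + aᵀ).IsSymm := by
    show (a + aᵀ)ᵀ = a + aᵀ
    rw [Matrix.transpose_add, Matrix.transpose_transpose, add_comm]
  have hNpd : PosDefQMat ((a + aᵀ).map (Int.cast : ℤ → ℚ)) := by
    intro y hy
    rw [quad_expand]
    have hsplit : ∑ i, ∑ j, y i * (((a + aᵀ).map (Int.cast : ℤ → ℚ)) i j) * y j
        = (∑ i, ∑ j, (a i j : ℚ) * y i * y j) + ∑ i, ∑ j, (a j i : ℚ) * y i * y j := by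
      rw [← Finset.sum_add_distrib]
      refine Finset.sum_congr rfl fun i _ => ?_
      rw [← Finset.sum_add_distrib]
      refine Finset.sum_congr rfl fun j _ => ?_
      simp only [Matrix.map_apply, Matrix.add_apply, Matrix.transpose_apply]
      push_cast
      ring
    have hswap : ∑ i, ∑ j, (a j i : ℚ) * y i * y j = ∑ i, ∑ j, (a i j : ℚ) * y i * y j := by
      rw [Finset.sum_comm]
      exact Finset.sum_congr rfl fun i _ => Finset.sum_congr rfl fun j _ => by ring
    have heval : evalForm a y = ∑ i, ∑ j, (a i j : ℚ) * y i * y j := rfl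
    have hpos := evalForm_pos_rat ha y hy
    rw [heval] at hpos
    rw [hsplit, hswap]
    linarith
  have hxmem2 : x ∈ MinVecs (Matrix.kroneckerMap (· * ·) G
      ((a + aᵀ).map (Int.cast : ℤ → ℚ))) := by
    rw [hNmap, kron_two_smul, minVecs_two_smul]
    exact hxmem
  obtain ⟨v, hv, u, hu, hz⟩ := hE r (a + aᵀ) hNsymm hNpd x hxmem2
  have hune : u ≠ 0 := by
    rw [hNmap, minVecs_two_smul] at hu
    exact hu.1
  have hvne : v ≠ 0 := hv.1
  set β : 𝓞 K := ω.equivFun.symm v with hβdef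
  have hβrepr : ∀ i, ω.repr β i = v i := by
    intro i
    have h1 := ω.equivFun.apply_symm_apply v
    have h2 := congrFun h1 i
    rwa [Module.Basis.equivFun_apply] at h2
  have hβne : β ≠ 0 := by
    intro h0
    apply hvne
    funext i
    rw [← hβrepr i, h0]
    simp
  have hβKne : ((β : 𝓞 K) : K) ≠ 0 := by
    simpa using hβne
  have hwk : ∀ k, w k = u k • β := by
    intro k
    apply ω.repr.injective
    ext i
    have h1 : ω.repr (w k) i = v i * u k := by
      have := congrFun hz (i, k)
      simpa [hxdef] using this
    rw [h1, _root_.map_smul, Finsupp.smul_apply, hβrepr i, smul_eq_mul]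
    ring
  set m : ℤ := evalForm a u with hmdef
  have hαm : α = (m : 𝓞 K) * (β * β) := by
    rw [← hw]
    simp only [evalForm, hwk, zsmul_eq_mul] at *
    push_cast [hmdef]
    rw [Finset.sum_mul]
    refine Finset.sum_congr rfl fun k _ => ?_
    rw [Finset.sum_mul]
    refine Finset.sum_congr rfl fun l _ => ?_
    push_cast
    ring
  have hm1 : m = 1 := by
    by_contra hne
    have hm2 : 2 ≤ m := by
      have := evalForm_one_le ha u hune
      omega
    apply hind
    have hσβ : ∀ σ : K →+* ℝ, σ ((β : 𝓞 K) : K) ≠ 0 := fun σ h =>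
      hβKne (σ.injective (by rw [h, map_zero]))
    refine ⟨β ^ 2, ((m - 1 : ℤ) : 𝓞 K) * β ^ 2, ?_, ?_, ?_⟩
    · intro σ
      have hc : ((β ^ 2 : 𝓞 K) : K) = ((β : 𝓞 K) : K) ^ 2 := by push_cast; ring
      rw [hc, map_pow]
      exact pow_two_pos_of_ne_zero (hσβ σ)
    · intro σ
      have hc : ((((m - 1 : ℤ) : 𝓞 K) * β ^ 2 : 𝓞 K) : K)
          = ((m - 1 : ℤ) : K) * ((β : 𝓞 K) : K) ^ 2 := by push_cast [coe_int_OK]; ring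
      rw [hc, _root_.map_mul, map_pow, map_intCast]
      have h1 : (0 : ℝ) < ((m - 1 : ℤ) : ℝ) := by
        exact_mod_cast (by omega : (0 : ℤ) < m - 1)
      exact mul_pos h1 (pow_two_pos_of_ne_zero (hσβ σ))
    · rw [hαm]
      push_cast
      ring
  constructor
  · refine ⟨β, ?_⟩
    rw [hαm, hm1]
    push_cast
    ring
  · constructor
    · refine ⟨u, hune, ?_⟩
      rw [qVal_gramQ, ← hmdef, hm1]
      norm_num
    · intro y hy
      rw [qVal_gramQ]
      exact_mod_cast evalForm_one_le ha y hy

end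
end
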